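/- Let p be a prime and J a multiset over (ZMod p)^3 with |J| = 4p - 3. Let N^k(J) denote the number of sub-multisets of J of cardinality k whose sum is 0. Then 1 - N^p(J) + N^{2p}(J) - N^{3p}(J) ≡ 0 (mod p). -/

import Mathlib

/-- Number of zero-sum sub-multisets of `J` of cardinality `k`. -/
def N {p : ℕ} (k : ℕ) (J : Multiset (Fin 3 → ZMod p)) : ℕ :=
  (J.powerset.filter (fun T => Multiset.card T = k ∧ T.sum = 0)).card

open Multiset in
lemma filter_card_powerset {α : Type*} (n : ℕ) (s : Multiset α) :
    (s.powerset.filter (fun t => Multiset.card t = n)) = s.powersetCard n := by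
  induction s using Multiset.induction generalizing n with
  | empty =>
    cases n <;> simp [Multiset.powerset_zero, Multiset.filter_singleton, Multiset.powersetCard_zero_right]
  | cons a s ih =>
    rw [Multiset.powerset_cons, Multiset.filter_add, Multiset.filter_map]
    cases n with
    | zero => simp [Function.comp_def, ih, Multiset.filter_eq_nil.2 (fun a _ => not_false)]
    | succ m =>
      rw [Multiset.powersetCard_cons, ih]
      congr 1
      simp only [Function.comp_def, Multiset.card_cons, Nat.add_right_cancel_iff]
      exact congrArg _ (ih m)

lemma N_eq (p n : ℕ) (a : Fin n → (Fin 3 → ZMod p)) (k : ℕ) :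
    N k (Multiset.map a (Finset.univ : Finset (Fin n)).val)
      = ((Finset.univ : Finset (Finset (Fin n))).filter
          (fun S => S.card = k ∧ ∑ j ∈ S, a j = 0)).card := by
  unfold N
  simp only [and_comm (a := Multiset.card _ = k)]
  rw [← Multiset.filter_filter, filter_card_powerset, Multiset.powersetCard_map,
    ← Finset.map_val_val_powersetCard]
  rw [Multiset.map_map, ← Multiset.countP_eq_card_filter, Multiset.countP_map]
  have h2 : Multiset.card (Multiset.filter (fun S : Finset (Fin n) => ((Multiset.map a ∘ Finset.val) S).sum = 0) (Finset.powersetCard k Finset.univ).val)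
      = ((Finset.powersetCard k Finset.univ).filter (fun S => ∑ j ∈ S, a j = 0)).card := rfl
  rw [h2, Finset.powersetCard_eq_filter, Finset.powerset_univ, Finset.filter_filter]

lemma mem_iff_supp {p n : ℕ} {x : Fin n → ZMod p} {S : Finset (Fin n)}
    (hx : Finset.univ.filter (fun j => x j ≠ 0) = S) (j : Fin n) : j ∈ S ↔ x j ≠ 0 := by
  subst hx; simp

def suppEquiv (p n : ℕ) (S : Finset (Fin n)) :
    {x : Fin n → ZMod p // Finset.univ.filter (fun j => x j ≠ 0) = S}
      ≃ (S → {y : ZMod p // y ≠ 0}) where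
  toFun x j := ⟨x.1 j.1, (mem_iff_supp x.2 j.1).1 j.2⟩
  invFun g := ⟨fun j => if h : j ∈ S then (g ⟨j, h⟩).1 else 0, by
    ext j
    simp only [Finset.mem_filter, Finset.mem_univ, true_and]
    constructor
    · intro hj
      by_contra h
      rw [dif_neg h] at hj
      exact hj rfl
    · intro hj
      rw [dif_pos hj]
      exact (g ⟨j, hj⟩).2⟩
  left_inv x := by
    apply Subtype.ext
    funext j
    by_cases h : j ∈ S
    · simp [dif_pos h]
    · simp only [dif_neg h]
      exact (not_not.mp (mt (mem_iff_supp x.2 j).2 h)).symm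
  right_inv g := by
    funext j
    apply Subtype.ext
    simp [dif_pos j.2]

lemma card_supp (p n : ℕ) [Fact p.Prime] (S : Finset (Fin n)) :
    (Finset.univ.filter (fun x : Fin n → ZMod p =>
       Finset.univ.filter (fun j => x j ≠ 0) = S)).card = (p - 1) ^ S.card := by
  have hy : Fintype.card {y : ZMod p // y ≠ 0} = p - 1 := by
    simp only [Ne, Fintype.card_subtype_compl, Fintype.card_subtype_eq, ZMod.card]
  rw [← Fintype.card_subtype, Fintype.card_congr (suppEquiv p n S), Fintype.card_fun,
    hy, Fintype.card_coe]

open MvPolynomial in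
lemma main_zmod (p : ℕ) [Fact p.Prime] (n : ℕ) (hn : n = 4 * p - 3)
    (a : Fin n → Fin 3 → ZMod p) :
    (1 : ZMod p)
      - ((Finset.univ : Finset (Finset (Fin n))).filter
          (fun S => S.card = p ∧ ∑ j ∈ S, a j = 0)).card
      + ((Finset.univ : Finset (Finset (Fin n))).filter
          (fun S => S.card = 2 * p ∧ ∑ j ∈ S, a j = 0)).card
      - ((Finset.univ : Finset (Finset (Fin n))).filter
          (fun S => S.card = 3 * p ∧ ∑ j ∈ S, a j = 0)).card = 0 := by
  classical
  have hp2 : 2 ≤ p := (Fact.out : p.Prime).two_le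
  set M : ℕ → ℕ := fun k => ((Finset.univ : Finset (Finset (Fin n))).filter
          (fun S => S.card = k ∧ ∑ j ∈ S, a j = 0)).card with hM
  set b : Fin 4 → Fin n → ZMod p :=
    fun i j => if h : (i : ℕ) < 3 then a j ⟨(i : ℕ), h⟩ else 1 with hb_def
  set f : Fin 4 → MvPolynomial (Fin n) (ZMod p) :=
    fun i => ∑ j : Fin n, MvPolynomial.C (b i j) * MvPolynomial.X j ^ (p - 1) with hf_def
  set supp : (Fin n → ZMod p) → Finset (Fin n) :=
    fun x => Finset.univ.filter (fun j => x j ≠ 0) with hsupp_def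
  -- degrees
  have hdeg : ∀ i, (f i).totalDegree ≤ p - 1 := by
    intro i
    refine le_trans (MvPolynomial.totalDegree_finset_sum _ _) (Finset.sup_le fun j _ => ?_)
    calc (MvPolynomial.C (b i j) * MvPolynomial.X j ^ (p - 1)).totalDegree
        ≤ (MvPolynomial.C (b i j)).totalDegree + (MvPolynomial.X (R := ZMod p) j ^ (p - 1)).totalDegree :=
          MvPolynomial.totalDegree_mul _ _
      _ ≤ 0 + (p - 1) * 1 := by
          gcongr
          · exact le_of_eq (MvPolynomial.totalDegree_C _)
          · exact le_trans (MvPolynomial.totalDegree_pow _ _) (by rw [MvPolynomial.totalDegree_X])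
      _ = p - 1 := by ring
  have hsum : ∑ i : Fin 4, (f i).totalDegree < Fintype.card (Fin n) := by
    have h1 : ∑ i : Fin 4, (f i).totalDegree ≤ ∑ _i : Fin 4, (p - 1) :=
      Finset.sum_le_sum (fun i _ => hdeg i)
    simp only [Finset.sum_const, Finset.card_univ, Fintype.card_fin, smul_eq_mul] at h1
    rw [Fintype.card_fin]
    omega
  have hdvd := char_dvd_card_solutions_of_fintype_sum_lt p hsum
  -- evaluation
  have heval : ∀ (x : Fin n → ZMod p) (i : Fin 4),
      MvPolynomial.eval x (f i) = ∑ j ∈ supp x, b i j := by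
    intro x i
    rw [hf_def]
    simp only
    rw [map_sum, hsupp_def]
    simp only
    rw [Finset.sum_filter]
    refine Finset.sum_congr rfl (fun j _ => ?_)
    rw [map_mul, map_pow, MvPolynomial.eval_C, MvPolynomial.eval_X]
    by_cases hxj : x j = 0
    · rw [if_neg (not_not.2 hxj), hxj, zero_pow (by omega : p - 1 ≠ 0), mul_zero]
    · rw [if_pos hxj, ZMod.pow_card_sub_one_eq_one hxj, mul_one]
  -- condition on supports
  have hbS : ∀ (S : Finset (Fin n)),
      (∀ i : Fin 4, ∑ j ∈ S, b i j = 0) ↔ (((S.card : ℕ) : ZMod p) = 0 ∧ ∑ j ∈ S, a j = 0) := by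
    intro S
    have hsum3 : ∀ (i : Fin 3), ∑ j ∈ S, b ⟨(i : ℕ), by omega⟩ j = (∑ j ∈ S, a j) i := by
      intro i
      rw [Finset.sum_apply]
      refine Finset.sum_congr rfl (fun j _ => ?_)
      rw [hb_def]
      simp only
      rw [dif_pos (show ((⟨(i : ℕ), by omega⟩ : Fin 4) : ℕ) < 3 from i.2)]
    have hsum4 : ∑ j ∈ S, b 3 j = ((S.card : ℕ) : ZMod p) := by
      have : ∀ j ∈ S, b 3 j = 1 := by
        intro j _
        rw [hb_def]
        simp only
        rw [dif_neg (by decide : ¬ (((3 : Fin 4) : ℕ) < 3))]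
      rw [Finset.sum_congr rfl this, Finset.sum_const, nsmul_eq_mul, mul_one]
    constructor
    · intro h
      refine ⟨by rw [← hsum4]; exact h 3, ?_⟩
      funext i
      have := h ⟨(i : ℕ), by omega⟩
      rw [hsum3 i] at this
      simpa using this
    · rintro ⟨h1, h2⟩ i
      by_cases hi : (i : ℕ) < 3
      · have : i = ⟨((⟨(i : ℕ), hi⟩ : Fin 3) : ℕ), by omega⟩ := by
          apply Fin.ext; rfl
        rw [this, hsum3 ⟨(i : ℕ), hi⟩, h2]
        rfl
      · have : i = 3 := by
          apply Fin.ext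
          have := i.2
          omega
        rw [this, hsum4, h1]
  -- fiber cardinalities
  have fiber : ∀ S : Finset (Fin n),
      (Finset.univ.filter (fun x : Fin n → ZMod p =>
        (∀ i, MvPolynomial.eval x (f i) = 0) ∧ supp x = S)).card
      = if (((S.card : ℕ) : ZMod p) = 0 ∧ ∑ j ∈ S, a j = 0) then (p - 1) ^ S.card else 0 := by
    intro S
    have hQ : ∀ x : Fin n → ZMod p, supp x = S →
        ((∀ i, MvPolynomial.eval x (f i) = 0)
          ↔ (((S.card : ℕ) : ZMod p) = 0 ∧ ∑ j ∈ S, a j = 0)) := by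
      intro x hx
      rw [← hbS S]
      constructor
      · intro h i
        rw [← hx, ← heval x i]
        exact h i
      · intro h i
        rw [heval x i, hx]
        exact h i
    split_ifs with hR
    · rw [← card_supp p n S]
      congr 1
      apply Finset.filter_congr
      intro x _
      exact ⟨fun h => h.2, fun hs => ⟨(hQ x hs).2 hR, hs⟩⟩
    · rw [Finset.card_eq_zero, Finset.filter_eq_empty_iff]
      rintro x _ ⟨h1, h2⟩
      exact hR ((hQ x h2).1 h1)
  -- count solutions
  have hcardN : Fintype.card {x : Fin n → ZMod p // ∀ i, MvPolynomial.eval x (f i) = 0}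
      = ∑ S : Finset (Fin n),
          (if (((S.card : ℕ) : ZMod p) = 0 ∧ ∑ j ∈ S, a j = 0) then (p - 1) ^ S.card else 0) := by
    rw [Fintype.card_of_subtype (Finset.univ.filter
        (fun x : Fin n → ZMod p => ∀ i, MvPolynomial.eval x (f i) = 0)) (by simp)]
    rw [Finset.card_eq_sum_card_fiberwise
      (f := supp) (t := Finset.univ) (fun x _ => Finset.mem_univ _)]
    refine Finset.sum_congr rfl (fun S _ => ?_)
    rw [Finset.filter_filter]
    exact fiber S
  -- cast to ZMod p
  have hneg : (((p - 1 : ℕ)) : ZMod p) = -1 := by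
    rw [Nat.cast_sub (by omega : 1 ≤ p)]
    simp [ZMod.natCast_self]
  have hdvd' : p ∣ Fintype.card {x : Fin n → ZMod p // ∀ i, MvPolynomial.eval x (f i) = 0} := by
    convert hdvd using 2
  have h0 : ∑ S : Finset (Fin n),
      (if (((S.card : ℕ) : ZMod p) = 0 ∧ ∑ j ∈ S, a j = 0)
        then (-1 : ZMod p) ^ S.card else 0) = 0 := by
    have h1 : ((Fintype.card {x : Fin n → ZMod p // ∀ i, MvPolynomial.eval x (f i) = 0} : ℕ) : ZMod p) = 0 :=
      (ZMod.natCast_eq_zero_iff _ p).2 hdvd'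
    rw [hcardN, Nat.cast_sum] at h1
    calc ∑ S : Finset (Fin n),
        (if (((S.card : ℕ) : ZMod p) = 0 ∧ ∑ j ∈ S, a j = 0)
          then (-1 : ZMod p) ^ S.card else 0)
        = ∑ S : Finset (Fin n),
          (((if (((S.card : ℕ) : ZMod p) = 0 ∧ ∑ j ∈ S, a j = 0)
            then (p - 1) ^ S.card else 0 : ℕ)) : ZMod p) :=
          Finset.sum_congr rfl (fun S _ => by split_ifs <;> simp [Nat.cast_pow, hneg])
      _ = 0 := h1
  -- reorganize by cardinality
  have hmaps : ∀ S : Finset (Fin n), S ∈ (Finset.univ : Finset (Finset (Fin n))) →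
      S.card ∈ Finset.range (4 * p) := by
    intro S _
    rw [Finset.mem_range]
    have h1 := Finset.card_le_univ S
    rw [Fintype.card_fin] at h1
    omega
  have h2 : ∑ S : Finset (Fin n), (if (((S.card : ℕ) : ZMod p) = 0 ∧ ∑ j ∈ S, a j = 0)
        then (-1 : ZMod p) ^ S.card else 0)
      = ∑ k ∈ Finset.range (4 * p),
          (if ((k : ZMod p) = 0) then (-1 : ZMod p) ^ k * (M k : ZMod p) else 0) := by
    rw [← Finset.sum_fiberwise_of_maps_to hmaps]
    refine Finset.sum_congr rfl (fun k hk => ?_)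
    split_ifs with hk0
    · have hterm : ∀ S ∈ Finset.univ.filter (fun S : Finset (Fin n) => S.card = k),
          (if (((S.card : ℕ) : ZMod p) = 0 ∧ ∑ j ∈ S, a j = 0)
            then (-1 : ZMod p) ^ S.card else 0)
          = (if (∑ j ∈ S, a j = 0) then (-1 : ZMod p) ^ k else 0) := by
        intro S hS
        have hSk : S.card = k := by simpa using (Finset.mem_filter.1 hS).2
        rw [hSk]
        simp [hk0]
      rw [Finset.sum_congr rfl hterm, ← Finset.sum_filter, Finset.filter_filter,
        Finset.sum_const, nsmul_eq_mul]
      simp only [hM]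
      ring
    · refine Finset.sum_eq_zero (fun S hS => ?_)
      rw [if_neg]
      rintro ⟨h1, _⟩
      have hSk : S.card = k := by simpa using (Finset.mem_filter.1 hS).2
      exact hk0 (hSk ▸ h1)
  have hset : (Finset.range (4 * p)).filter (fun k => ((k : ℕ) : ZMod p) = 0)
      = ({0, p, 2 * p, 3 * p} : Finset ℕ) := by
    ext k
    simp only [Finset.mem_filter, Finset.mem_range, ZMod.natCast_eq_zero_iff,
      Finset.mem_insert, Finset.mem_singleton]
    constructor
    · rintro ⟨hlt, c, rfl⟩
      have hc : c < 4 := by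
        by_contra hcon
        push_neg at hcon
        have : 4 * p ≤ p * c := by
          calc 4 * p = p * 4 := by ring
          _ ≤ p * c := Nat.mul_le_mul_left _ hcon
        omega
      interval_cases c <;> omega
    · rintro (rfl | rfl | rfl | rfl)
      · exact ⟨by omega, ⟨0, by ring⟩⟩
      · exact ⟨by omega, ⟨1, by ring⟩⟩
      · exact ⟨by omega, ⟨2, by ring⟩⟩
      · exact ⟨by omega, ⟨3, by ring⟩⟩
  have h3 : ∑ k ∈ Finset.range (4 * p),
        (if ((k : ZMod p) = 0) then (-1 : ZMod p) ^ k * (M k : ZMod p) else 0)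
      = ∑ k ∈ ({0, p, 2 * p, 3 * p} : Finset ℕ), (-1 : ZMod p) ^ k * (M k : ZMod p) := by
    rw [← Finset.sum_filter, hset]
  have hd0 : (0 : ℕ) ∉ ({p, 2 * p, 3 * p} : Finset ℕ) := by simp; omega
  have hd1 : p ∉ ({2 * p, 3 * p} : Finset ℕ) := by simp; omega
  have hd2 : 2 * p ∉ ({3 * p} : Finset ℕ) := by simp; omega
  have h4 : ∑ k ∈ ({0, p, 2 * p, 3 * p} : Finset ℕ), (-1 : ZMod p) ^ k * (M k : ZMod p)
      = (M 0 : ZMod p) + (-1 : ZMod p) ^ p * (M p : ZMod p)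
        + (-1 : ZMod p) ^ (2 * p) * (M (2 * p) : ZMod p)
        + (-1 : ZMod p) ^ (3 * p) * (M (3 * p) : ZMod p) := by
    rw [show ({0, p, 2 * p, 3 * p} : Finset ℕ)
        = insert 0 (insert p (insert (2 * p) {3 * p})) from rfl]
    rw [Finset.sum_insert hd0, Finset.sum_insert hd1, Finset.sum_insert hd2,
      Finset.sum_singleton]
    ring
  have hM0 : M 0 = 1 := by
    have hone : Finset.univ.filter (fun S : Finset (Fin n) => S.card = 0 ∧ ∑ j ∈ S, a j = 0)
        = {(∅ : Finset (Fin n))} := by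
      ext S
      simp only [Finset.mem_filter, Finset.mem_univ, true_and, Finset.mem_singleton,
        Finset.card_eq_zero]
      exact ⟨fun h => h.1, by rintro rfl; exact ⟨rfl, Finset.sum_empty⟩⟩
    simp only [hM, hone, Finset.card_singleton]
  have hpow1 : ((-1 : ZMod p)) ^ p = -1 := ZMod.pow_card (-1)
  have hpow2 : ((-1 : ZMod p)) ^ (2 * p) = 1 := by
    rw [pow_mul, show ((-1 : ZMod p)) ^ 2 = 1 by ring, one_pow]
  have hpow3 : ((-1 : ZMod p)) ^ (3 * p) = -1 := by
    rw [pow_mul, show ((-1 : ZMod p)) ^ 3 = -1 by ring, hpow1]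
  have key : (M 0 : ZMod p) + (-1 : ZMod p) ^ p * (M p : ZMod p)
        + (-1 : ZMod p) ^ (2 * p) * (M (2 * p) : ZMod p)
        + (-1 : ZMod p) ^ (3 * p) * (M (3 * p) : ZMod p) = 0 := by
    rw [← h4, ← h3, ← h2, h0]
  rw [hM0, hpow1, hpow2, hpow3] at key
  push_cast at key ⊢
  linear_combination key

theorem stmt_7 (p : ℕ) (hp : p.Prime) (J : Multiset (Fin 3 → ZMod p))
    (hJ : Multiset.card J = 4 * p - 3) :
    (1 - (N p J : ℤ) + N (2 * p) J - N (3 * p) J) ≡ 0 [ZMOD p] := by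
  haveI : Fact p.Prime := ⟨hp⟩
  obtain ⟨l, rfl⟩ : ∃ l : List (Fin 3 → ZMod p), (↑l : Multiset _) = J :=
    ⟨J.toList, Multiset.coe_toList J⟩
  have hl : l.length = 4 * p - 3 := by simpa using hJ
  have hrep : (↑l : Multiset (Fin 3 → ZMod p))
      = Multiset.map l.get (Finset.univ : Finset (Fin l.length)).val := by
    show _ = Multiset.map l.get ↑(List.finRange l.length)
    rw [Multiset.map_coe, ← List.ofFn_eq_map, List.ofFn_get]
  have := main_zmod p l.length hl l.get
  rw [← N_eq p l.length l.get p, ← N_eq p l.length l.get (2 * p),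
    ← N_eq p l.length l.get (3 * p), ← hrep] at this
  apply (ZMod.intCast_eq_intCast_iff _ _ _).mp
  push_cast
  exact this
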